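/- For all Schwartz functions f, g ∈ 𝒮(ℝ, ℂ), the function ℝ → ℂ, t ↦ θ(f, g(·+t)), is differentiable on ℝ, and its derivative at every t ∈ ℝ equals θ(f, g′(·+t)), where g′ is the derivative of g and g(·+t) denotes the translate x ↦ g(x + t). -/

import Mathlib

open MeasureTheory Filter

/-- The Fourier transform `f̂(p) = (2π)^{-1/2} ∫ e^{-ipx} f(x) dx`. -/
noncomputable def fourierHat (f : ℝ → ℂ) (p : ℝ) : ℂ :=
  ((Real.sqrt (2 * Real.pi) : ℂ))⁻¹ *
    ∫ x : ℝ, Complex.exp (-Complex.I * (p : ℂ) * (x : ℂ)) * f x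

/-- The principal-value two-point function
`θ(f,g) = lim_{ε→0⁺} ∫_{|p|≥ε} (1 - e^{-p})⁻¹ conj(f̂(p)) ĝ(p) dp`. -/
noncomputable def twoPoint (f g : ℝ → ℂ) : ℂ :=
  limUnder (nhdsWithin (0 : ℝ) (Set.Ioi 0))
    (fun ε : ℝ => ∫ p in {p : ℝ | ε ≤ |p|},
      ((1 - Real.exp (-p) : ℝ) : ℂ)⁻¹ * (starRingEnd ℂ) (fourierHat f p) * fourierHat g p)

open Complex FourierTransform Set



noncomputable def wC (p : ℝ) : ℂ := ((1 - Real.exp (-p) : ℝ) : ℂ)⁻¹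

noncomputable def psiF (φ : ℝ → ℂ) (p : ℝ) : ℂ := wC p * (φ p - φ (-p)) + φ (-p)

lemma norm_wC (p : ℝ) : ‖wC p‖ = |1 - Real.exp (-p)|⁻¹ := by
  unfold wC; rw [norm_inv, Complex.norm_real, Real.norm_eq_abs]

lemma one_sub_exp_pos {p : ℝ} (hp : 0 < p) : 0 < 1 - Real.exp (-p) := by
  have h := Real.exp_lt_exp.mpr (neg_lt_zero.mpr hp)
  simp only [Real.exp_zero] at h
  linarith

lemma norm_wC_le {p : ℝ} (hp : 0 < p) : ‖wC p‖ ≤ (1 + p) / p := by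
  rw [norm_wC, abs_of_pos (one_sub_exp_pos hp)]
  have h1 := Real.add_one_le_exp p
  have h2 : Real.exp (-p) = (Real.exp p)⁻¹ := Real.exp_neg p
  have h3 := Real.exp_pos p
  have h4 : p / (1 + p) ≤ 1 - Real.exp (-p) := by
    rw [div_le_iff₀ (by linarith : (0:ℝ) < 1 + p)]
    rw [h2]
    rw [sub_mul, one_mul]
    have h5 : (Real.exp p)⁻¹ * (1 + p) ≤ 1 := by
      rw [inv_mul_le_iff₀ h3]
      linarith
    nlinarith
  calc (1 - Real.exp (-p))⁻¹ ≤ (p / (1 + p))⁻¹ := by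
        apply inv_anti₀ (by positivity) h4
    _ = (1 + p) / p := by rw [inv_div]

lemma norm_wC_mul_le {p : ℝ} (hp : 0 < p) : ‖wC p‖ * p ≤ 1 + p := by
  have := mul_le_mul_of_nonneg_right (norm_wC_le hp) (le_of_lt hp)
  rwa [div_mul_cancel₀ _ (ne_of_gt hp)] at this

lemma norm_wC_le_two {p : ℝ} (hp : 1 ≤ p) : ‖wC p‖ ≤ 2 := by
  have h := norm_wC_le (by linarith : (0:ℝ) < p)
  have : (1 + p) / p ≤ 2 := by rw [div_le_iff₀ (by linarith)]; linarith
  linarith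

lemma norm_wC_le_of_le_neg {ε p : ℝ} (hε : 0 < ε) (hp : p ≤ -ε) :
    ‖wC p‖ ≤ (Real.exp ε - 1)⁻¹ := by
  have h1 : Real.exp ε ≤ Real.exp (-p) := Real.exp_le_exp.mpr (by linarith)
  have h2 : 1 < Real.exp ε := by have := Real.add_one_le_exp ε; linarith
  rw [norm_wC, abs_of_neg (by linarith : 1 - Real.exp (-p) < 0)]
  rw [neg_sub]
  exact inv_anti₀ (by linarith) (by linarith)

lemma norm_wC_le_of_ge {ε p : ℝ} (hε : 0 < ε) (hp : ε ≤ p) :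
    ‖wC p‖ ≤ (1 - Real.exp (-ε))⁻¹ := by
  have h1 : Real.exp (-p) ≤ Real.exp (-ε) := Real.exp_le_exp.mpr (by linarith)
  rw [norm_wC, abs_of_pos (one_sub_exp_pos (by linarith : (0:ℝ) < p))]
  exact inv_anti₀ (one_sub_exp_pos hε) (by linarith)

lemma wC_neg {p : ℝ} (hp : 0 < p) : wC (-p) = 1 - wC p := by
  have h1 : (1 : ℝ) - Real.exp (-p) ≠ 0 := ne_of_gt (one_sub_exp_pos hp)
  have h2 : (1 : ℝ) - Real.exp p ≠ 0 := by
    have := Real.add_one_le_exp p; intro h; nlinarith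
  have hme : Real.exp (-p) * Real.exp p = 1 := by
    rw [← Real.exp_add]; simp
  have h1c : ((1 - Real.exp (-p) : ℝ) : ℂ) ≠ 0 := by
    exact_mod_cast Complex.ofReal_ne_zero.mpr h1
  have h2c : ((1 - Real.exp p : ℝ) : ℂ) ≠ 0 := by
    exact_mod_cast Complex.ofReal_ne_zero.mpr h2
  have hmec : Complex.exp (-(p:ℂ)) * Complex.exp (p:ℂ) = 1 := by
    rw [← Complex.exp_add]; simp
  unfold wC
  rw [neg_neg]
  push_cast at h1c h2c ⊢
  field_simp
  linear_combination -hmec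

lemma hasDerivAt_expc (c : ℂ) (s : ℝ) :
    HasDerivAt (fun x : ℝ => Complex.exp (c * ↑x)) (c * Complex.exp (c * ↑s)) s := by
  have h : HasDerivAt (fun z : ℂ => Complex.exp (c * z)) (c * Complex.exp (c * ↑s)) (↑s : ℂ) := by
    simpa [mul_comm, Function.comp_def] using
      (Complex.hasDerivAt_exp (c * ↑s)).comp (↑s : ℂ) ((hasDerivAt_id (↑s : ℂ)).const_mul c)
  exact h.comp_ofReal

lemma norm_exp_eq_one {z : ℂ} (hz : z.re = 0) : ‖Complex.exp z‖ = 1 := by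
  rw [Complex.norm_exp, hz, Real.exp_zero]

lemma norm_exp_I_mul (p s : ℝ) : ‖Complex.exp (Complex.I * ↑p * ↑s)‖ = 1 := by
  apply norm_exp_eq_one; simp

lemma exp_lip (c : ℂ) (hc : c.re = 0) (p q : ℝ) :
    ‖Complex.exp (c * ↑p) - Complex.exp (c * ↑q)‖ ≤ ‖c‖ * |p - q| := by
  have hd : ∀ x : ℝ, HasDerivAt (fun x : ℝ => Complex.exp (c * ↑x))
      (c * Complex.exp (c * ↑x)) x := fun x => hasDerivAt_expc c x
  have hl : LipschitzWith ‖c‖₊ (fun x : ℝ => Complex.exp (c * ↑x)) := by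
    apply lipschitzWith_of_nnnorm_deriv_le (fun x => (hd x).differentiableAt)
    intro x
    rw [(hd x).deriv]
    have h1 : ‖Complex.exp (c * ↑x)‖ = 1 := norm_exp_eq_one (by simp [hc])
    rw [← NNReal.coe_le_coe, coe_nnnorm, coe_nnnorm, norm_mul, h1, mul_one]
  simpa [dist_eq_norm, Real.dist_eq] using hl.dist_le_mul p q


lemma fourierHat_eq_fourierIntegral (u : ℝ → ℂ) (p : ℝ) :
    fourierHat u p = ((Real.sqrt (2 * Real.pi) : ℂ))⁻¹ * 𝓕 u (p / (2 * Real.pi)) := by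
  unfold fourierHat
  congr 1
  rw [Real.fourier_real_eq_integral_exp_smul]
  congr 1
  funext x
  simp only [smul_eq_mul]
  congr 1
  have hπ := Real.pi_ne_zero
  have : -2 * Real.pi * x * (p / (2 * Real.pi)) = -(p * x) := by field_simp
  rw [this]
  push_cast
  ring_nf

lemma fourierHat_translate (u : ℝ → ℂ) (s p : ℝ) :
    fourierHat (fun x => u (x + s)) p
      = Complex.exp (Complex.I * ↑p * ↑s) * fourierHat u p := by
  unfold fourierHat
  have h1 : (∫ x : ℝ, Complex.exp (-Complex.I * ↑p * ↑x) * u (x + s))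
      = ∫ x : ℝ, Complex.exp (Complex.I * ↑p * ↑s) *
          (Complex.exp (-Complex.I * ↑p * ↑x) * u x) := by
    rw [← integral_add_right_eq_self
      (fun y => Complex.exp (Complex.I * ↑p * ↑s) *
        (Complex.exp (-Complex.I * ↑p * ↑y) * u y)) s]
    congr 1
    funext x
    have : Complex.exp (Complex.I * ↑p * ↑s) * Complex.exp (-Complex.I * ↑p * ↑(x + s))
        = Complex.exp (-Complex.I * ↑p * ↑x) := by
      rw [← Complex.exp_add]
      congr 1
      push_cast
      ring
    rw [← mul_assoc, this]
  rw [h1, MeasureTheory.integral_const_mul]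
  ring

lemma fourierHat_deriv (g : SchwartzMap ℝ ℂ) (p : ℝ) :
    fourierHat (deriv ⇑g) p = Complex.I * ↑p * fourierHat (⇑g) p := by
  rw [fourierHat_eq_fourierIntegral, fourierHat_eq_fourierIntegral]
  have hdg : deriv ⇑g = ⇑(SchwartzMap.derivCLM ℝ ℂ g) := by
    funext x; rw [SchwartzMap.derivCLM_apply]
  have h := Real.fourier_deriv g.integrable g.differentiable
    (by rw [hdg]; exact (SchwartzMap.derivCLM ℝ ℂ g).integrable)
  rw [h]
  simp only [smul_eq_mul]
  have hπ : ((Real.pi : ℝ) : ℂ) ≠ 0 := Complex.ofReal_ne_zero.mpr Real.pi_ne_zero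
  push_cast
  rw [show (2:ℂ) * ↑Real.pi * I * (↑p / (2 * ↑Real.pi)) = I * ↑p from by
    field_simp]
  ring


lemma schwartz_decay4 (S : SchwartzMap ℝ ℂ) :
    ∃ C : ℝ, 0 ≤ C ∧ ∀ x : ℝ, (1 + |x|) ^ 4 * ‖S x‖ ≤ C := by
  refine ⟨2 ^ 4 * ((Finset.Iic ((4:ℕ), (0:ℕ))).sup
    (fun m => SchwartzMap.seminorm ℝ m.1 m.2)) S, ?_, fun x => ?_⟩
  · exact mul_nonneg (by norm_num) (apply_nonneg _ S)
  · have h := SchwartzMap.one_add_le_sup_seminorm_apply (𝕜 := ℝ) (m := ((4:ℕ), (0:ℕ)))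
      (le_refl 4) (le_refl 0) S x
    rw [norm_iteratedFDeriv_zero, Real.norm_eq_abs] at h
    exact_mod_cast h

lemma schwartz_bdd (S : SchwartzMap ℝ ℂ) :
    ∃ C : ℝ, 0 ≤ C ∧ ∀ x : ℝ, ‖S x‖ ≤ C := by
  obtain ⟨C, hC0, hC⟩ := schwartz_decay4 S
  refine ⟨C, hC0, fun x => ?_⟩
  have h1 : (1:ℝ) ≤ (1 + |x|) ^ 4 := by
    have : (1:ℝ) ≤ 1 + |x| := by have := abs_nonneg x; linarith
    calc (1:ℝ) = 1 ^ 4 := by norm_num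
    _ ≤ (1 + |x|) ^ 4 := by gcongr
  have := hC x
  nlinarith [norm_nonneg (S x)]

lemma schwartz_lip (S : SchwartzMap ℝ ℂ) :
    ∃ K : ℝ, 0 ≤ K ∧ ∀ p q : ℝ, ‖S p - S q‖ ≤ K * |p - q| := by
  obtain ⟨C, hC0, hC⟩ := schwartz_bdd (SchwartzMap.derivCLM ℝ ℂ S)
  have hder : ∀ x : ℝ, ‖deriv (⇑S) x‖ ≤ C := fun x => by
    have := hC x; rwa [SchwartzMap.derivCLM_apply] at this
  have hl : LipschitzWith ⟨C, hC0⟩ ⇑S := by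
    apply lipschitzWith_of_nnnorm_deriv_le S.differentiable
    intro x
    exact (NNReal.coe_le_coe (r₁ := ‖deriv S x‖₊) (r₂ := ⟨C, hC0⟩)).mp (hder x)
  exact ⟨C, hC0, fun p q => by
    have h := hl.dist_le_mul p q; rw [dist_eq_norm, Real.dist_eq] at h; exact h⟩

lemma fourierHat_eq_clm (f : SchwartzMap ℝ ℂ) :
    fourierHat ⇑f = fun p =>
      ((Real.sqrt (2 * Real.pi) : ℂ))⁻¹ *
        (SchwartzMap.fourierTransformCLM ℂ f) (p / (2 * Real.pi)) := by
  funext p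
  rw [fourierHat_eq_fourierIntegral, SchwartzMap.fourierTransformCLM_apply]
  rfl

lemma fourierHat_cont (f : SchwartzMap ℝ ℂ) : Continuous (fourierHat ⇑f) := by
  rw [fourierHat_eq_clm]
  exact continuous_const.mul
    ((SchwartzMap.fourierTransformCLM ℂ f).continuous.comp (continuous_id.div_const _))

lemma two_pi_pos : (0:ℝ) < 2 * Real.pi := by positivity

lemma one_le_two_pi : (1:ℝ) ≤ 2 * Real.pi := by
  have := Real.pi_gt_three; linarith

lemma fourierHat_decay4 (f : SchwartzMap ℝ ℂ) :
    ∃ C : ℝ, 0 ≤ C ∧ ∀ p : ℝ, (1 + |p|) ^ 4 * ‖fourierHat ⇑f p‖ ≤ C := by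
  obtain ⟨C, hC0, hC⟩ := schwartz_decay4 (SchwartzMap.fourierTransformCLM ℂ f)
  set c0 : ℂ := ((Real.sqrt (2 * Real.pi) : ℂ))⁻¹ with hc0
  refine ⟨(2 * Real.pi) ^ 4 * ‖c0‖ * C, by positivity, fun p => ?_⟩
  rw [fourierHat_eq_clm]
  set q : ℝ := p / (2 * Real.pi) with hq
  have hpq : |p| = 2 * Real.pi * |q| := by
    rw [hq, abs_div, abs_of_pos two_pi_pos]
    field_simp
  have h1 : (1 + |p|) ≤ 2 * Real.pi * (1 + |q|) := by
    rw [hpq]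
    have := one_le_two_pi
    have := abs_nonneg q
    nlinarith
  have h2 : (1 + |p|) ^ 4 ≤ (2 * Real.pi) ^ 4 * (1 + |q|) ^ 4 := by
    calc (1 + |p|) ^ 4 ≤ (2 * Real.pi * (1 + |q|)) ^ 4 := by
          apply pow_le_pow_left₀ (by positivity) h1
      _ = (2 * Real.pi) ^ 4 * (1 + |q|) ^ 4 := by ring
  have h3 : ‖c0 * (SchwartzMap.fourierTransformCLM ℂ f) q‖
      = ‖c0‖ * ‖(SchwartzMap.fourierTransformCLM ℂ f) q‖ := norm_mul _ _
  simp only []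
  rw [h3]
  have h4 := hC q
  have hn : (0:ℝ) ≤ ‖(SchwartzMap.fourierTransformCLM ℂ f) q‖ := norm_nonneg _
  calc (1 + |p|) ^ 4 * (‖c0‖ * ‖(SchwartzMap.fourierTransformCLM ℂ f) q‖)
      ≤ (2 * Real.pi) ^ 4 * (1 + |q|) ^ 4 * (‖c0‖ * ‖(SchwartzMap.fourierTransformCLM ℂ f) q‖) := by
        apply mul_le_mul_of_nonneg_right h2 (by positivity)
    _ = (2 * Real.pi) ^ 4 * ‖c0‖ * ((1 + |q|) ^ 4 * ‖(SchwartzMap.fourierTransformCLM ℂ f) q‖) := by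
        ring
    _ ≤ (2 * Real.pi) ^ 4 * ‖c0‖ * C := by
        apply mul_le_mul_of_nonneg_left h4 (by positivity)

lemma fourierHat_lip (f : SchwartzMap ℝ ℂ) :
    ∃ K : ℝ, 0 ≤ K ∧ ∀ p q : ℝ, ‖fourierHat ⇑f p - fourierHat ⇑f q‖ ≤ K * |p - q| := by
  obtain ⟨K, hK0, hK⟩ := schwartz_lip (SchwartzMap.fourierTransformCLM ℂ f)
  set c0 : ℂ := ((Real.sqrt (2 * Real.pi) : ℂ))⁻¹ with hc0
  refine ⟨‖c0‖ * K, by positivity, fun p q => ?_⟩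
  rw [fourierHat_eq_clm]
  simp only []
  rw [← mul_sub, norm_mul]
  have h1 := hK (p / (2 * Real.pi)) (q / (2 * Real.pi))
  have h2 : |p / (2 * Real.pi) - q / (2 * Real.pi)| ≤ |p - q| := by
    rw [div_sub_div_same, abs_div, abs_of_pos two_pi_pos]
    rw [div_le_iff₀ two_pi_pos]
    have := one_le_two_pi
    have := abs_nonneg (p - q)
    nlinarith
  calc ‖c0‖ * ‖(SchwartzMap.fourierTransformCLM ℂ f) (p / (2 * Real.pi))
        - (SchwartzMap.fourierTransformCLM ℂ f) (q / (2 * Real.pi))‖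
      ≤ ‖c0‖ * (K * |p / (2 * Real.pi) - q / (2 * Real.pi)|) := by
        apply mul_le_mul_of_nonneg_left h1 (norm_nonneg _)
    _ ≤ ‖c0‖ * (K * |p - q|) := by
        apply mul_le_mul_of_nonneg_left (mul_le_mul_of_nonneg_left h2 hK0) (norm_nonneg _)
    _ = ‖c0‖ * K * |p - q| := by ring


section PV

variable {φ : ℝ → ℂ} {C K : ℝ}

lemma measurable_wC : Measurable wC := by
  unfold wC
  exact (Complex.measurable_ofReal.comp
    (measurable_const.sub (Real.measurable_exp.comp measurable_neg))).inv

lemma hC_nonneg (hC : ∀ p : ℝ, (1 + |p|) ^ 3 * ‖φ p‖ ≤ C) : 0 ≤ C :=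
  le_trans (by positivity) (hC 0)

lemma norm_le_C (hC : ∀ p : ℝ, (1 + |p|) ^ 3 * ‖φ p‖ ≤ C) (p : ℝ) : ‖φ p‖ ≤ C := by
  have h1 : (1:ℝ) ≤ (1 + |p|) ^ 3 := by
    calc (1:ℝ) = 1 ^ 3 := by norm_num
    _ ≤ (1 + |p|) ^ 3 := pow_le_pow_left₀ (by norm_num) (by linarith [abs_nonneg p]) 3
  nlinarith [hC p, norm_nonneg (φ p)]

lemma norm_le_inv_sq (hC : ∀ p : ℝ, (1 + |p|) ^ 3 * ‖φ p‖ ≤ C) (p : ℝ) :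
    ‖φ p‖ ≤ C * (1 + p ^ 2)⁻¹ := by
  have h1 : (0:ℝ) < 1 + p ^ 2 := by positivity
  rw [← div_eq_mul_inv, le_div_iff₀ h1]
  have e1 : 1 + p ^ 2 ≤ (1 + |p|) ^ 3 := by nlinarith [abs_nonneg p, _root_.sq_abs p]
  calc ‖φ p‖ * (1 + p ^ 2) ≤ ‖φ p‖ * (1 + |p|) ^ 3 :=
        mul_le_mul_of_nonneg_left e1 (norm_nonneg _)
    _ = (1 + |p|) ^ 3 * ‖φ p‖ := mul_comm _ _
    _ ≤ C := hC p

lemma mul_norm_le_inv_sq (hC : ∀ p : ℝ, (1 + |p|) ^ 3 * ‖φ p‖ ≤ C) (p : ℝ) :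
    (1 + |p|) * ‖φ p‖ ≤ C * (1 + p ^ 2)⁻¹ := by
  have h1 : (0:ℝ) < 1 + p ^ 2 := by positivity
  rw [← div_eq_mul_inv, le_div_iff₀ h1]
  have e1 : (1 + |p|) * (1 + p ^ 2) ≤ (1 + |p|) ^ 3 := by
    nlinarith [abs_nonneg p, _root_.sq_abs p]
  calc (1 + |p|) * ‖φ p‖ * (1 + p ^ 2) = ((1 + |p|) * (1 + p ^ 2)) * ‖φ p‖ := by ring
    _ ≤ (1 + |p|) ^ 3 * ‖φ p‖ := mul_le_mul_of_nonneg_right e1 (norm_nonneg _)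
    _ ≤ C := hC p

lemma integrable_of_decay (hφm : AEStronglyMeasurable φ) 
    (hC : ∀ p : ℝ, (1 + |p|) ^ 3 * ‖φ p‖ ≤ C) : Integrable φ := by
  apply Integrable.mono' (integrable_inv_one_add_sq.const_mul C) hφm
  exact ae_of_all _ fun p => norm_le_inv_sq hC p

lemma integrableOn_psiF (hφc : Continuous φ)
    (hC : ∀ p : ℝ, (1 + |p|) ^ 3 * ‖φ p‖ ≤ C)
    (hK : ∀ p : ℝ, ‖φ p - φ (-p)‖ ≤ K * |p|) :
    IntegrableOn (psiF φ) (Set.Ioi 0) := by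
  have hK0 : 0 ≤ K := by
    have h1 := hK 1
    have h2 := norm_nonneg (φ 1 - φ (-1))
    simp only [abs_one, mul_one] at h1
    linarith
  have hC0 : 0 ≤ C := hC_nonneg hC
  have hm : Measurable (psiF φ) := by
    unfold psiF
    exact (measurable_wC.mul
      (hφc.measurable.sub (hφc.measurable.comp measurable_neg))).add
      (hφc.measurable.comp measurable_neg)
  rw [← Set.Ioc_union_Ioi_eq_Ioi (le_of_lt one_pos)]
  apply IntegrableOn.union
  · apply Measure.integrableOn_of_bounded (M := K * 2 + C) measure_Ioc_lt_top.ne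
      hm.aestronglyMeasurable
    filter_upwards [ae_restrict_mem measurableSet_Ioc] with p hp
    obtain ⟨hp0, hp1⟩ := hp
    have h1 : ‖psiF φ p‖ ≤ ‖wC p‖ * ‖φ p - φ (-p)‖ + ‖φ (-p)‖ := by
      unfold psiF
      calc ‖wC p * (φ p - φ (-p)) + φ (-p)‖
          ≤ ‖wC p * (φ p - φ (-p))‖ + ‖φ (-p)‖ := norm_add_le _ _
        _ = ‖wC p‖ * ‖φ p - φ (-p)‖ + ‖φ (-p)‖ := by rw [norm_mul]
    have h2 : ‖wC p‖ * ‖φ p - φ (-p)‖ ≤ K * 2 := by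
      calc ‖wC p‖ * ‖φ p - φ (-p)‖ ≤ ‖wC p‖ * (K * |p|) :=
            mul_le_mul_of_nonneg_left (hK p) (norm_nonneg _)
        _ = K * (‖wC p‖ * p) := by rw [abs_of_pos hp0]; ring
        _ ≤ K * (1 + p) := mul_le_mul_of_nonneg_left (norm_wC_mul_le hp0) hK0
        _ ≤ K * 2 := by nlinarith
    have h3 : ‖φ (-p)‖ ≤ C := norm_le_C hC (-p)
    linarith
  · apply Integrable.mono' ((integrable_inv_one_add_sq.const_mul (5 * C)).restrict)
      hm.aestronglyMeasurable
    filter_upwards [ae_restrict_mem measurableSet_Ioi] with p hp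
    have hp1 : (1:ℝ) ≤ p := le_of_lt hp
    have hw2 : ‖wC p‖ ≤ 2 := norm_wC_le_two hp1
    have ha : ‖φ p‖ ≤ C * (1 + p ^ 2)⁻¹ := norm_le_inv_sq hC p
    have hb : ‖φ (-p)‖ ≤ C * (1 + p ^ 2)⁻¹ := by
      have := norm_le_inv_sq hC (-p); rwa [neg_sq] at this
    have hinv : (0:ℝ) ≤ (1 + p ^ 2)⁻¹ := by positivity
    calc ‖psiF φ p‖ ≤ ‖wC p‖ * ‖φ p - φ (-p)‖ + ‖φ (-p)‖ := by
          unfold psiF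
          calc ‖wC p * (φ p - φ (-p)) + φ (-p)‖
              ≤ ‖wC p * (φ p - φ (-p))‖ + ‖φ (-p)‖ := norm_add_le _ _
            _ = ‖wC p‖ * ‖φ p - φ (-p)‖ + ‖φ (-p)‖ := by rw [norm_mul]
      _ ≤ 2 * (‖φ p‖ + ‖φ (-p)‖) + ‖φ (-p)‖ := by
          have := norm_sub_le (φ p) (φ (-p))
          nlinarith [norm_nonneg (φ p - φ (-p)), norm_nonneg (φ p), norm_nonneg (φ (-p))]
      _ ≤ 2 * (C * (1 + p ^ 2)⁻¹ + C * (1 + p ^ 2)⁻¹) + C * (1 + p ^ 2)⁻¹ := by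
          nlinarith
      _ = 5 * C * (1 + p ^ 2)⁻¹ := by ring

lemma pv_integral_eq (hφc : Continuous φ)
    (hC : ∀ p : ℝ, (1 + |p|) ^ 3 * ‖φ p‖ ≤ C)
    {ε : ℝ} (hε : 0 < ε) :
    ∫ p in {p : ℝ | ε ≤ |p|}, wC p * φ p = ∫ p in Set.Ioi ε, psiF φ p := by
  have hφint : Integrable φ := integrable_of_decay hφc.aestronglyMeasurable hC
  have hm : AEStronglyMeasurable (fun p => wC p * φ p) volume :=
    (measurable_wC.mul hφc.measurable).aestronglyMeasurable
  have hset : {p : ℝ | ε ≤ |p|} = Set.Iic (-ε) ∪ Set.Ici ε := by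
    ext p
    simp only [Set.mem_setOf_eq, Set.mem_union, Set.mem_Iic, Set.mem_Ici, le_abs]
    constructor
    · rintro (h | h)
      · right; exact h
      · left; linarith
    · rintro (h | h)
      · right; linarith
      · left; exact h
  have hInt1 : IntegrableOn (fun p => wC p * φ p) (Set.Iic (-ε)) := by
    apply Integrable.mono' ((hφint.norm.const_mul ((Real.exp ε - 1)⁻¹)).restrict)
      (hm.restrict)
    filter_upwards [ae_restrict_mem measurableSet_Iic] with p hp
    rw [norm_mul]
    exact mul_le_mul_of_nonneg_right (norm_wC_le_of_le_neg hε hp) (norm_nonneg _)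
  have hInt2 : IntegrableOn (fun p => wC p * φ p) (Set.Ici ε) := by
    apply Integrable.mono' ((hφint.norm.const_mul ((1 - Real.exp (-ε))⁻¹)).restrict)
      (hm.restrict)
    filter_upwards [ae_restrict_mem measurableSet_Ici] with p hp
    rw [norm_mul]
    exact mul_le_mul_of_nonneg_right (norm_wC_le_of_ge hε hp) (norm_nonneg _)
  have hdisj : Disjoint (Set.Iic (-ε)) (Set.Ici ε) := by
    rw [Set.disjoint_left]
    intro p h1 h2
    simp only [Set.mem_Iic] at h1
    simp only [Set.mem_Ici] at h2
    linarith
  rw [hset, setIntegral_union hdisj measurableSet_Ici hInt1 hInt2]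
  have e1 : ∫ p in Set.Iic (-ε), wC p * φ p
      = ∫ p in Set.Ioi ε, wC (-p) * φ (-p) := by
    rw [← integral_comp_neg_Ioi]
  have e2 : ∫ p in Set.Ici ε, wC p * φ p = ∫ p in Set.Ioi ε, wC p * φ p :=
    integral_Ici_eq_integral_Ioi
  have hInt2' : IntegrableOn (fun p => wC p * φ p) (Set.Ioi ε) :=
    hInt2.mono_set Set.Ioi_subset_Ici_self
  have hInt3 : IntegrableOn (fun p => wC (-p) * φ (-p)) (Set.Ioi ε) := by
    apply Integrable.mono' (((hφint.norm.comp_neg).const_mul ((Real.exp ε - 1)⁻¹)).restrict)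
      (((measurable_wC.comp measurable_neg).mul
        (hφc.measurable.comp measurable_neg)).aestronglyMeasurable.restrict)
    filter_upwards [ae_restrict_mem measurableSet_Ioi] with p hp
    show ‖wC (-p) * φ (-p)‖ ≤ _
    rw [norm_mul]
    exact mul_le_mul_of_nonneg_right
      (norm_wC_le_of_le_neg hε (by simp only [Set.mem_Ioi] at hp; linarith))
      (norm_nonneg _)
  rw [e1, e2, ← integral_add hInt3 hInt2']
  apply setIntegral_congr_fun measurableSet_Ioi
  intro p hp
  simp only [Set.mem_Ioi] at hp
  have hp0 : 0 < p := lt_trans hε hp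
  show wC (-p) * φ (-p) + wC p * φ p = psiF φ p
  unfold psiF
  rw [wC_neg hp0]
  ring

lemma tendsto_pv (hφc : Continuous φ)
    (hC : ∀ p : ℝ, (1 + |p|) ^ 3 * ‖φ p‖ ≤ C)
    (hK : ∀ p : ℝ, ‖φ p - φ (-p)‖ ≤ K * |p|) :
    Tendsto (fun ε : ℝ => ∫ p in Set.Ioi ε, psiF φ p) (nhdsWithin 0 (Set.Ioi 0))
      (nhds (∫ p in Set.Ioi 0, psiF φ p)) := by
  have hpsi : IntegrableOn (psiF φ) (Set.Ioi 0) := integrableOn_psiF hφc hC hK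
  have hm : Measurable (psiF φ) := by
    unfold psiF
    exact (measurable_wC.mul
      (hφc.measurable.sub (hφc.measurable.comp measurable_neg))).add
      (hφc.measurable.comp measurable_neg)
  have key : Tendsto (fun ε : ℝ => ∫ p in Set.Ioi (0:ℝ), (Set.Ioi ε).indicator (psiF φ) p)
      (nhdsWithin 0 (Set.Ioi 0)) (nhds (∫ p in Set.Ioi 0, psiF φ p)) := by
    apply tendsto_integral_filter_of_dominated_convergence (fun p => ‖psiF φ p‖)
    · exact Eventually.of_forall fun ε =>
        ((hm.indicator measurableSet_Ioi).aestronglyMeasurable.restrict)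
    · exact Eventually.of_forall fun ε =>
        ae_of_all _ fun p => norm_indicator_le_norm_self _ _
    · exact hpsi.norm
    · filter_upwards [ae_restrict_mem measurableSet_Ioi] with p hp
      apply Tendsto.congr' _ tendsto_const_nhds
      filter_upwards [Ioo_mem_nhdsGT_of_mem (Set.mem_Ico.mpr ⟨le_refl 0, hp⟩)] with ε hε
      exact (Set.indicator_of_mem (Set.mem_Ioi.mpr hε.2) _).symm
  apply key.congr'
  filter_upwards [self_mem_nhdsWithin] with ε hε
  rw [setIntegral_indicator measurableSet_Ioi, Set.Ioi_inter_Ioi,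
    max_eq_right (le_of_lt hε)]

lemma pv_main (hφc : Continuous φ)
    (hC : ∀ p : ℝ, (1 + |p|) ^ 3 * ‖φ p‖ ≤ C)
    (hK : ∀ p : ℝ, ‖φ p - φ (-p)‖ ≤ K * |p|) :
    Tendsto (fun ε : ℝ => ∫ p in {p : ℝ | ε ≤ |p|}, wC p * φ p)
      (nhdsWithin 0 (Set.Ioi 0)) (nhds (∫ p in Set.Ioi 0, psiF φ p)) := by
  apply (tendsto_pv hφc hC hK).congr'
  filter_upwards [self_mem_nhdsWithin] with ε hε
  exact (pv_integral_eq hφc hC hε).symm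

end PV


lemma norm_le_of_decay4 {h : ℝ → ℂ} {C : ℝ}
    (hC : ∀ p : ℝ, (1 + |p|) ^ 4 * ‖h p‖ ≤ C) (p : ℝ) : ‖h p‖ ≤ C := by
  have h1 : (1:ℝ) ≤ (1 + |p|) ^ 4 := by
    calc (1:ℝ) = 1 ^ 4 := by norm_num
    _ ≤ (1 + |p|) ^ 4 := pow_le_pow_left₀ (by norm_num) (by linarith [abs_nonneg p]) 4
  nlinarith [hC p, norm_nonneg (h p)]

lemma decay3_of_decay4 {h : ℝ → ℂ} {C : ℝ}
    (hC : ∀ p : ℝ, (1 + |p|) ^ 4 * ‖h p‖ ≤ C) (p : ℝ) : (1 + |p|) ^ 3 * ‖h p‖ ≤ C := by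
  have h1 : (1 + |p|) ^ 3 ≤ (1 + |p|) ^ 4 :=
    pow_le_pow_right₀ (by linarith [abs_nonneg p]) (by norm_num)
  calc (1 + |p|) ^ 3 * ‖h p‖ ≤ (1 + |p|) ^ 4 * ‖h p‖ :=
        mul_le_mul_of_nonneg_right h1 (norm_nonneg _)
    _ ≤ C := hC p

lemma decay3_mul_abs_of_decay4 {h : ℝ → ℂ} {C : ℝ}
    (hC : ∀ p : ℝ, (1 + |p|) ^ 4 * ‖h p‖ ≤ C) (p : ℝ) :
    (1 + |p|) ^ 3 * (|p| * ‖h p‖) ≤ C := by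
  have h1 : (1 + |p|) ^ 3 * |p| ≤ (1 + |p|) ^ 4 := by
    have h2 : (1 + |p|) ^ 4 = (1 + |p|) ^ 3 * (1 + |p|) := by ring
    rw [h2]
    exact mul_le_mul_of_nonneg_left (by linarith [abs_nonneg p]) (by positivity)
  calc (1 + |p|) ^ 3 * (|p| * ‖h p‖) = ((1 + |p|) ^ 3 * |p|) * ‖h p‖ := by ring
    _ ≤ (1 + |p|) ^ 4 * ‖h p‖ := mul_le_mul_of_nonneg_right h1 (norm_nonneg _)
    _ ≤ C := hC p

lemma wC_def (p : ℝ) : wC p = ((1 - Real.exp (-p) : ℝ) : ℂ)⁻¹ := rfl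

lemma twoPoint_eq_pv (u v : ℝ → ℂ) {C K : ℝ}
    (hφc : Continuous (fun p => (starRingEnd ℂ) (fourierHat u p) * fourierHat v p))
    (hC : ∀ p : ℝ, (1 + |p|) ^ 3 * ‖(starRingEnd ℂ) (fourierHat u p) * fourierHat v p‖ ≤ C)
    (hK : ∀ p : ℝ, ‖(starRingEnd ℂ) (fourierHat u p) * fourierHat v p
      - (starRingEnd ℂ) (fourierHat u (-p)) * fourierHat v (-p)‖ ≤ K * |p|) :
    twoPoint u v = ∫ p in Set.Ioi 0,
      psiF (fun p => (starRingEnd ℂ) (fourierHat u p) * fourierHat v p) p := by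
  unfold twoPoint
  apply Tendsto.limUnder_eq
  apply Tendsto.congr _ (pv_main hφc hC hK)
  intro ε
  apply integral_congr_ae (Eventually.of_forall fun p => ?_)
  rw [wC_def]
  ring

noncomputable def phiS (f g : SchwartzMap ℝ ℂ) (s p : ℝ) : ℂ :=
  (starRingEnd ℂ) (fourierHat ⇑f p) *
    (Complex.exp (Complex.I * ↑p * ↑s) * fourierHat ⇑g p)

noncomputable def phiD (f g : SchwartzMap ℝ ℂ) (s p : ℝ) : ℂ :=
  (starRingEnd ℂ) (fourierHat ⇑f p) *
    (Complex.I * ↑p * Complex.exp (Complex.I * ↑p * ↑s) * fourierHat ⇑g p)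

/-- For Schwartz functions `f, g`, the map `t ↦ θ(f, g(·+t))` is differentiable on `ℝ`
with derivative `θ(f, g′(·+t))` at every `t`. -/
theorem twoPoint_translate_hasDerivAt (f g : SchwartzMap ℝ ℂ) (t : ℝ) :
    HasDerivAt (fun s : ℝ => twoPoint (⇑f) (fun x => g (x + s)))
      (twoPoint (⇑f) (fun x => deriv (⇑g) (x + t))) t := by
  obtain ⟨Cf, hCf0, hCf⟩ := fourierHat_decay4 f
  obtain ⟨Cg, hCg0, hCg⟩ := fourierHat_decay4 g
  obtain ⟨Kf, hKf0, hKf⟩ := fourierHat_lip f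
  obtain ⟨Kg, hKg0, hKg⟩ := fourierHat_lip g
  have hFc := fourierHat_cont f
  have hGc := fourierHat_cont g
  have hFb : ∀ p : ℝ, ‖fourierHat ⇑f p‖ ≤ Cf := norm_le_of_decay4 hCf
  have hGb : ∀ p : ℝ, ‖fourierHat ⇑g p‖ ≤ Cg := norm_le_of_decay4 hCg
  have hG3 : ∀ p : ℝ, (1 + |p|) ^ 3 * ‖fourierHat ⇑g p‖ ≤ Cg := decay3_of_decay4 hCg
  -- continuity of exp factor
  have hexpc : ∀ s : ℝ, Continuous fun p : ℝ => Complex.exp (Complex.I * ↑p * ↑s) :=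
    fun s => Complex.continuous_exp.comp
      (((continuous_const.mul Complex.continuous_ofReal).mul continuous_const))
  have hconjc : Continuous fun p : ℝ => (starRingEnd ℂ) (fourierHat ⇑f p) := by
    simp only [starRingEnd_apply]
    exact continuous_star.comp hFc
  have hphiS_cont : ∀ s : ℝ, Continuous (phiS f g s) := fun s => by
    unfold phiS
    exact hconjc.mul ((hexpc s).mul hGc)
  have habs : ∀ p : ℝ, |p - (-p)| = 2 * |p| := fun p => by
    rw [sub_neg_eq_add, show p + p = 2 * p by ring, abs_mul]
    norm_num
  -- decay bound for phiS
  have hphiS_C : ∀ s p : ℝ, (1 + |p|) ^ 3 * ‖phiS f g s p‖ ≤ Cf * Cg := by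
    intro s p
    unfold phiS
    rw [norm_mul, RCLike.norm_conj, norm_mul, norm_exp_I_mul, one_mul]
    calc (1 + |p|) ^ 3 * (‖fourierHat ⇑f p‖ * ‖fourierHat ⇑g p‖)
        = ‖fourierHat ⇑f p‖ * ((1 + |p|) ^ 3 * ‖fourierHat ⇑g p‖) := by ring
      _ ≤ Cf * Cg := mul_le_mul (hFb p) (hG3 p) (by positivity) hCf0
  -- Lipschitz-type bound for phiS
  have hphiS_K : ∀ s p : ℝ, ‖phiS f g s p - phiS f g s (-p)‖
      ≤ (2 * (Kf * Cg + Cf * |s| * Cg + Cf * Kg)) * |p| := by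
    intro s p
    have hre : ∀ a : ℝ, Complex.exp (Complex.I * ↑a * ↑s)
        = Complex.exp (Complex.I * ↑s * ↑a) := fun a => by congr 1; ring
    have hdecomp : phiS f g s p - phiS f g s (-p)
        = ((starRingEnd ℂ) (fourierHat ⇑f p) - (starRingEnd ℂ) (fourierHat ⇑f (-p))) *
            (Complex.exp (Complex.I * ↑p * ↑s) * fourierHat ⇑g p)
          + (starRingEnd ℂ) (fourierHat ⇑f (-p)) *
            ((Complex.exp (Complex.I * ↑p * ↑s) - Complex.exp (Complex.I * ↑(-p) * ↑s)) *
              fourierHat ⇑g p)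
          + (starRingEnd ℂ) (fourierHat ⇑f (-p)) *
            (Complex.exp (Complex.I * ↑(-p) * ↑s) * (fourierHat ⇑g p - fourierHat ⇑g (-p))) := by
      unfold phiS; ring
    rw [hdecomp]
    have b1 : ‖fourierHat ⇑f p - fourierHat ⇑f (-p)‖ ≤ Kf * (2 * |p|) := by
      have h := hKf p (-p); rwa [habs p] at h
    have b3 : ‖fourierHat ⇑g p - fourierHat ⇑g (-p)‖ ≤ Kg * (2 * |p|) := by
      have h := hKg p (-p); rwa [habs p] at h
    have hnormIs : ‖Complex.I * (s : ℂ)‖ = |s| := by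
      rw [norm_mul, Complex.norm_I, one_mul, Complex.norm_real, Real.norm_eq_abs]
    have b2 : ‖Complex.exp (Complex.I * ↑p * ↑s) - Complex.exp (Complex.I * ↑(-p) * ↑s)‖
        ≤ |s| * (2 * |p|) := by
      rw [hre p, hre (-p)]
      have h := exp_lip (Complex.I * (s : ℂ)) (by simp) p (-p)
      rwa [habs p, hnormIs] at h
    have t1 : ‖((starRingEnd ℂ) (fourierHat ⇑f p) - (starRingEnd ℂ) (fourierHat ⇑f (-p))) *
        (Complex.exp (Complex.I * ↑p * ↑s) * fourierHat ⇑g p)‖ ≤ (Kf * (2 * |p|)) * Cg := by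
      rw [norm_mul, ← map_sub, RCLike.norm_conj, norm_mul, norm_exp_I_mul, one_mul]
      exact mul_le_mul b1 (hGb p) (norm_nonneg _) (by positivity)
    have t2 : ‖(starRingEnd ℂ) (fourierHat ⇑f (-p)) *
        ((Complex.exp (Complex.I * ↑p * ↑s) - Complex.exp (Complex.I * ↑(-p) * ↑s)) *
          fourierHat ⇑g p)‖ ≤ Cf * ((|s| * (2 * |p|)) * Cg) := by
      rw [norm_mul, RCLike.norm_conj, norm_mul]
      exact mul_le_mul (hFb (-p)) (mul_le_mul b2 (hGb p) (norm_nonneg _) (by positivity))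
        (by positivity) hCf0
    have t3 : ‖(starRingEnd ℂ) (fourierHat ⇑f (-p)) *
        (Complex.exp (Complex.I * ↑(-p) * ↑s) * (fourierHat ⇑g p - fourierHat ⇑g (-p)))‖
        ≤ Cf * (Kg * (2 * |p|)) := by
      rw [norm_mul, RCLike.norm_conj, norm_mul, norm_exp_I_mul, one_mul]
      exact mul_le_mul (hFb (-p)) b3 (norm_nonneg _) hCf0
    calc ‖_ + _ + _‖ ≤ ‖_ + _‖ + ‖_‖ := norm_add_le _ _
      _ ≤ ((Kf * (2 * |p|)) * Cg + Cf * ((|s| * (2 * |p|)) * Cg)) + Cf * (Kg * (2 * |p|)) :=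
          add_le_add ((norm_add_le _ _).trans (add_le_add t1 t2)) t3
      _ = (2 * (Kf * Cg + Cf * |s| * Cg + Cf * Kg)) * |p| := by ring
  -- translate identity
  have htrans : ∀ s p : ℝ, fourierHat (fun x => ⇑g (x + s)) p
      = Complex.exp (Complex.I * ↑p * ↑s) * fourierHat ⇑g p :=
    fun s p => fourierHat_translate ⇑g s p
  -- twoPoint for translates
  have htp : ∀ s : ℝ, twoPoint ⇑f (fun x => ⇑g (x + s))
      = ∫ p in Set.Ioi 0, psiF (phiS f g s) p := by
    intro s
    have hraw : (fun p : ℝ => (starRingEnd ℂ) (fourierHat ⇑f p) *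
        fourierHat (fun x => ⇑g (x + s)) p) = phiS f g s :=
      funext fun p => by rw [htrans s p]; rfl
    rw [twoPoint_eq_pv ⇑f (fun x => ⇑g (x + s))
      (C := Cf * Cg) (K := 2 * (Kf * Cg + Cf * |s| * Cg + Cf * Kg))
      (by rw [hraw]; exact hphiS_cont s)
      (fun p => by rw [htrans s p]; exact hphiS_C s p)
      (fun p => by rw [htrans s p, htrans s (-p)]; exact hphiS_K s p)]
    rw [hraw]
  -- norm of phiD
  have hphiD_eq : ∀ s q : ℝ, ‖phiD f g s q‖ = |q| * ‖fourierHat ⇑f q * fourierHat ⇑g q‖ := by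
    intro s q
    unfold phiD
    simp only [norm_mul, RCLike.norm_conj, norm_exp_I_mul, Complex.norm_I,
      Complex.norm_real, Real.norm_eq_abs]
    ring
  have hA3 : ∀ q : ℝ, (1 + |q|) ^ 3 * ‖fourierHat ⇑f q * fourierHat ⇑g q‖ ≤ Cf * Cg := by
    intro q
    rw [norm_mul]
    calc (1 + |q|) ^ 3 * (‖fourierHat ⇑f q‖ * ‖fourierHat ⇑g q‖)
        = ‖fourierHat ⇑f q‖ * ((1 + |q|) ^ 3 * ‖fourierHat ⇑g q‖) := by ring
      _ ≤ Cf * Cg := mul_le_mul (hFb q) (hG3 q) (by positivity) hCf0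
  have hA1 : ∀ q : ℝ, (1 + |q|) * ‖fourierHat ⇑f q * fourierHat ⇑g q‖
      ≤ (Cf * Cg) * (1 + q ^ 2)⁻¹ := mul_norm_le_inv_sq hA3
  -- pointwise derivative in s
  have hD : ∀ q s : ℝ, HasDerivAt (fun s : ℝ => phiS f g s q) (phiD f g s q) s := by
    intro q s
    exact ((hasDerivAt_expc (Complex.I * (q : ℂ)) s).mul_const (fourierHat ⇑g q)).const_mul
      ((starRingEnd ℂ) (fourierHat ⇑f q))
  have hDer : ∀ p s : ℝ, HasDerivAt (fun s : ℝ => psiF (phiS f g s) p)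
      (psiF (phiD f g s) p) s := by
    intro p s
    exact (((hD p s).sub (hD (-p) s)).const_mul (wC p)).add (hD (-p) s)
  -- measurability
  have hmeasS : ∀ s : ℝ, AEStronglyMeasurable (fun p => psiF (phiS f g s) p)
      (volume.restrict (Set.Ioi 0)) := by
    intro s
    have hm : Measurable (fun p => psiF (phiS f g s) p) := by
      unfold psiF
      exact (measurable_wC.mul ((hphiS_cont s).measurable.sub
        ((hphiS_cont s).measurable.comp measurable_neg))).add
        ((hphiS_cont s).measurable.comp measurable_neg)
    exact hm.aestronglyMeasurable.restrict
  have hphiD_cont : ∀ s : ℝ, Continuous (phiD f g s) := by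
    intro s
    unfold phiD
    apply hconjc.mul
    apply Continuous.mul ?_ hGc
    apply Continuous.mul ?_ (hexpc s)
    exact continuous_const.mul Complex.continuous_ofReal
  have hmeasD : AEStronglyMeasurable (fun p => psiF (phiD f g t) p)
      (volume.restrict (Set.Ioi 0)) := by
    have hm : Measurable (fun p => psiF (phiD f g t) p) := by
      unfold psiF
      exact (measurable_wC.mul ((hphiD_cont t).measurable.sub
        ((hphiD_cont t).measurable.comp measurable_neg))).add
        ((hphiD_cont t).measurable.comp measurable_neg)
    exact hm.aestronglyMeasurable.restrict
  -- integrability of the integrand at t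
  have hintS : Integrable (fun p => psiF (phiS f g t) p) (volume.restrict (Set.Ioi 0)) :=
    integrableOn_psiF (hphiS_cont t) (hphiS_C t) (hphiS_K t)
  -- uniform bound for derivative
  have hbound : ∀ᵐ p ∂(volume.restrict (Set.Ioi (0:ℝ))), ∀ s ∈ Metric.ball t 1,
      ‖psiF (phiD f g s) p‖ ≤ 3 * (Cf * Cg) * (1 + p ^ 2)⁻¹ := by
    filter_upwards [ae_restrict_mem measurableSet_Ioi] with p hp
    intro s _
    have hp0 : 0 < p := hp
    have habsp : |p| = p := abs_of_pos hp0
    have habsn : |(-p)| = p := by rw [abs_neg, habsp]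
    have h1 : ‖phiD f g s p‖ = p * ‖fourierHat ⇑f p * fourierHat ⇑g p‖ := by
      rw [hphiD_eq s p, habsp]
    have h2 : ‖phiD f g s (-p)‖ = p * ‖fourierHat ⇑f (-p) * fourierHat ⇑g (-p)‖ := by
      rw [hphiD_eq s (-p), habsn]
    have hN1 : (0:ℝ) ≤ ‖fourierHat ⇑f p * fourierHat ⇑g p‖ := norm_nonneg _
    have hN2 : (0:ℝ) ≤ ‖fourierHat ⇑f (-p) * fourierHat ⇑g (-p)‖ := norm_nonneg _
    have e1 : (1 + p) * ‖fourierHat ⇑f p * fourierHat ⇑g p‖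
        ≤ Cf * Cg * (1 + p ^ 2)⁻¹ := by
      have h := hA1 p; rwa [habsp] at h
    have e2 : (1 + p) * ‖fourierHat ⇑f (-p) * fourierHat ⇑g (-p)‖
        ≤ Cf * Cg * (1 + p ^ 2)⁻¹ := by
      have h := hA1 (-p); rwa [habsn, neg_sq] at h
    have hw := norm_wC_mul_le hp0
    have hwn : (0:ℝ) ≤ ‖wC p‖ := norm_nonneg _
    calc ‖psiF (phiD f g s) p‖
        = ‖wC p * (phiD f g s p - phiD f g s (-p)) + phiD f g s (-p)‖ := rfl
      _ ≤ ‖wC p * (phiD f g s p - phiD f g s (-p))‖ + ‖phiD f g s (-p)‖ := norm_add_le _ _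
      _ = ‖wC p‖ * ‖phiD f g s p - phiD f g s (-p)‖
            + p * ‖fourierHat ⇑f (-p) * fourierHat ⇑g (-p)‖ := by rw [norm_mul, h2]
      _ ≤ ‖wC p‖ * (p * ‖fourierHat ⇑f p * fourierHat ⇑g p‖
            + p * ‖fourierHat ⇑f (-p) * fourierHat ⇑g (-p)‖)
            + p * ‖fourierHat ⇑f (-p) * fourierHat ⇑g (-p)‖ := by
          have h3 := norm_sub_le (phiD f g s p) (phiD f g s (-p))
          rw [h1, h2] at h3
          have h4 := mul_le_mul_of_nonneg_left h3 hwn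
          linarith
      _ = (‖wC p‖ * p) * (‖fourierHat ⇑f p * fourierHat ⇑g p‖
            + ‖fourierHat ⇑f (-p) * fourierHat ⇑g (-p)‖)
            + p * ‖fourierHat ⇑f (-p) * fourierHat ⇑g (-p)‖ := by ring
      _ ≤ (1 + p) * (‖fourierHat ⇑f p * fourierHat ⇑g p‖
            + ‖fourierHat ⇑f (-p) * fourierHat ⇑g (-p)‖)
            + (1 + p) * ‖fourierHat ⇑f (-p) * fourierHat ⇑g (-p)‖ := by
          have q1 := mul_le_mul_of_nonneg_right hw (add_nonneg hN1 hN2)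
          have q2 : p * ‖fourierHat ⇑f (-p) * fourierHat ⇑g (-p)‖
              ≤ (1 + p) * ‖fourierHat ⇑f (-p) * fourierHat ⇑g (-p)‖ :=
            mul_le_mul_of_nonneg_right (by linarith) hN2
          linarith
      _ = (1 + p) * ‖fourierHat ⇑f p * fourierHat ⇑g p‖
            + 2 * ((1 + p) * ‖fourierHat ⇑f (-p) * fourierHat ⇑g (-p)‖) := by ring
      _ ≤ Cf * Cg * (1 + p ^ 2)⁻¹ + 2 * (Cf * Cg * (1 + p ^ 2)⁻¹) := by linarith
      _ = 3 * (Cf * Cg) * (1 + p ^ 2)⁻¹ := by ring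
  have hbint : Integrable (fun p : ℝ => 3 * (Cf * Cg) * (1 + p ^ 2)⁻¹)
      (volume.restrict (Set.Ioi 0)) :=
    (integrable_inv_one_add_sq.const_mul (3 * (Cf * Cg))).restrict
  have hdiff : ∀ᵐ p ∂(volume.restrict (Set.Ioi (0:ℝ))), ∀ s ∈ Metric.ball t 1,
      HasDerivAt (fun s : ℝ => psiF (phiS f g s) p) (psiF (phiD f g s) p) s :=
    ae_of_all _ fun p s _ => hDer p s
  have key := (hasDerivAt_integral_of_dominated_loc_of_deriv_le
    (F := fun s p => psiF (phiS f g s) p) (F' := fun s p => psiF (phiD f g s) p)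
    (μ := volume.restrict (Set.Ioi (0:ℝ))) (x₀ := t)
    (bound := fun p : ℝ => 3 * (Cf * Cg) * (1 + p ^ 2)⁻¹)
    (Metric.ball_mem_nhds t one_pos) (Eventually.of_forall hmeasS) hintS hmeasD hbound hbint hdiff).2
  -- derivative-side twoPoint value
  have hrawd : (fun p : ℝ => (starRingEnd ℂ) (fourierHat ⇑f p) *
      fourierHat (fun x => deriv ⇑g (x + t)) p) = phiD f g t := by
    funext p
    rw [fourierHat_translate (deriv ⇑g) t p, fourierHat_deriv g p]
    unfold phiD
    ring
  have htd : twoPoint ⇑f (fun x => deriv ⇑g (x + t))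
      = ∫ p in Set.Ioi 0, psiF (phiD f g t) p := by
    rw [twoPoint_eq_pv ⇑f (fun x => deriv ⇑g (x + t)) (C := Cf * Cg) (K := 2 * (Cf * Cg))
      (by rw [hrawd]; exact hphiD_cont t)
      (fun p => by
        rw [congrFun hrawd p, hphiD_eq t p, norm_mul]
        calc (1 + |p|) ^ 3 * (|p| * (‖fourierHat ⇑f p‖ * ‖fourierHat ⇑g p‖))
            = ‖fourierHat ⇑f p‖ * ((1 + |p|) ^ 3 * (|p| * ‖fourierHat ⇑g p‖)) := by ring
          _ ≤ Cf * Cg := mul_le_mul (hFb p) (decay3_mul_abs_of_decay4 hCg p)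
              (by positivity) hCf0)
      (fun p => by
        rw [congrFun hrawd p, congrFun hrawd (-p)]
        have n1 : ‖phiD f g t p‖ ≤ |p| * (Cf * Cg) := by
          rw [hphiD_eq t p, norm_mul]
          exact mul_le_mul_of_nonneg_left
            (mul_le_mul (hFb p) (hGb p) (norm_nonneg _) hCf0) (abs_nonneg p)
        have n2 : ‖phiD f g t (-p)‖ ≤ |p| * (Cf * Cg) := by
          rw [hphiD_eq t (-p), norm_mul, abs_neg]
          exact mul_le_mul_of_nonneg_left
            (mul_le_mul (hFb (-p)) (hGb (-p)) (norm_nonneg _) hCf0) (abs_nonneg p)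
        calc ‖phiD f g t p - phiD f g t (-p)‖ ≤ ‖phiD f g t p‖ + ‖phiD f g t (-p)‖ :=
              norm_sub_le _ _
          _ ≤ |p| * (Cf * Cg) + |p| * (Cf * Cg) := add_le_add n1 n2
          _ = 2 * (Cf * Cg) * |p| := by ring)]
    rw [hrawd]
  -- final assembly
  have e1 : (fun s : ℝ => twoPoint ⇑f (fun x => ⇑g (x + s)))
      = fun s : ℝ => ∫ p in Set.Ioi 0, psiF (phiS f g s) p := funext htp
  rw [e1, htd]
  exact key
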